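/- If f : ℝ^k → ℂ is measurable and κ_η(f) < ∞ for some η > k, then the theta series converges absolutely at every point: for all x ∈ ℝ, y > 0, φ ∈ ℝ, and ξ₁, ξ₂ ∈ ℝ^k, the family n ↦ f_φ((n − ξ₂)√y) e(½‖n − ξ₂‖² x + n·ξ₁), indexed by n ∈ ℤ^k, is absolutely summable. -/

import Mathlib

open scoped RealInnerProductSpace
open MeasureTheory
open scoped ENNReal Classical

/-- ℝ^k as a Euclidean space. -/
abbrev E (k : ℕ) := EuclideanSpace ℝ (Fin k)

/-- `e(t) = exp(2πit)`. -/
noncomputable def e (t : ℝ) : ℂ := Complex.exp (2 * Real.pi * Complex.I * t)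

/-- `f_φ := R(k_φ)f`: equal to `f` when `φ ≡ 0 (mod 2π)`, to `w ↦ f(−w)` when
`φ ≡ π (mod 2π)`, and given by the oscillatory integral otherwise. -/
noncomputable def fphi {k : ℕ} (f : E k → ℂ) (φ : ℝ) : E k → ℂ :=
  fun w =>
    if ∃ m : ℤ, φ = 2 * Real.pi * m then f w
    else if ∃ m : ℤ, φ = Real.pi + 2 * Real.pi * m then f (-w)
    else ((|Real.sin φ| ^ (-(k : ℝ) / 2) : ℝ) : ℂ) *
      ∫ v : E k,
        e (((1 / 2) * (‖w‖ ^ 2 + ‖v‖ ^ 2) * Real.cos φ - ⟪w, v⟫) / Real.sin φ) * f v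

/-- `κ_η(f) = sup_{w,φ} (1+‖w‖²)^{η/2} |f_φ(w)|` (valued in `ℝ≥0∞`). -/
noncomputable def kappa {k : ℕ} (η : ℝ) (f : E k → ℂ) : ℝ≥0∞ :=
  ⨆ (w : E k) (φ : ℝ),
    ENNReal.ofReal ((1 + ‖w‖ ^ 2) ^ (η / 2) * ‖fphi f φ w‖)

/-- The lattice point `n ∈ ℤ^k` viewed as a vector in ℝ^k. -/
noncomputable def intVec {k : ℕ} (n : Fin k → ℤ) : E k :=
  (EuclideanSpace.equiv (Fin k) ℝ).symm (fun i => (n i : ℝ))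

/-- The Jacobi theta function
`Θ_f(z, φ; ξ) = y^{k/4} Σ_{n ∈ ℤ^k} f_φ((n − ξ₂)√y) e(½‖n − ξ₂‖² x + n·ξ₁)`,
where `z = x + iy`. -/
noncomputable def Theta {k : ℕ} (f : E k → ℂ) (z : ℂ) (φ : ℝ) (ξ : E k × E k) : ℂ :=
  ((z.im ^ ((k : ℝ) / 4) : ℝ) : ℂ) *
    ∑' n : Fin k → ℤ,
      fphi f φ (Real.sqrt z.im • (intVec n - ξ.2)) *
        e ((1 / 2) * ‖intVec n - ξ.2‖ ^ 2 * z.re + ⟪intVec n, ξ.1⟫)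

lemma abs_e (t : ℝ) : ‖e t‖ = 1 := by
  rw [e, Complex.norm_exp]
  simp [Complex.mul_re, Complex.mul_im]

lemma summable_int_shift (c : ℝ) {q : ℝ} (hq : 1 < 2 * q) :
    Summable fun n : ℤ => (1 + ((n : ℝ) - c) ^ 2) ^ (-q) := by
  have hq0 : 0 < q := by linarith
  have base := Real.summable_abs_int_rpow hq
  refine ((base.mul_left ((2 * (1 + |c|) ^ 2) ^ q)).of_norm_bounded_eventually) ?_
  rw [Filter.eventually_cofinite]
  refine Set.Finite.subset (Set.finite_singleton 0) fun n hn => ?_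
  simp only [Set.mem_setOf_eq, Set.mem_singleton_iff] at hn ⊢
  by_contra h0
  apply hn; clear hn
  have hapos : (0:ℝ) < 1 + ((n : ℝ) - c) ^ 2 := by positivity
  have hKpos : (0:ℝ) < 2 * (1 + |c|) ^ 2 := by positivity
  have h1 : |(n : ℝ)| ^ 2 ≤ (2 * (1 + |c|) ^ 2) * (1 + ((n : ℝ) - c) ^ 2) := by
    rw [sq_abs]
    nlinarith [sq_nonneg ((n:ℝ) - c - c), sq_abs c, abs_nonneg c, sq_nonneg ((n:ℝ) - c),
      mul_nonneg (abs_nonneg c) (sq_nonneg ((n:ℝ) - c)),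
      mul_nonneg (sq_nonneg c) (sq_nonneg ((n:ℝ) - c))]
  have h2 : (1 + ((n : ℝ) - c) ^ 2) ^ (-q) ≤ (|(n:ℝ)| ^ 2 / (2 * (1 + |c|) ^ 2)) ^ (-q) := by
    refine Real.rpow_le_rpow_of_nonpos (by positivity) ?_ (by linarith)
    rw [div_le_iff₀ hKpos, mul_comm]; exact h1
  have h3 : (|(n:ℝ)| ^ 2 / (2 * (1 + |c|) ^ 2)) ^ (-q)
      = (2 * (1 + |c|) ^ 2) ^ q * |(n:ℝ)| ^ (-(2*q)) := by
    rw [Real.div_rpow (by positivity) hKpos.le, Real.rpow_neg hKpos.le,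
      div_eq_mul_inv, inv_inv, mul_comm]
    congr 1
    rw [← Real.rpow_natCast |(n:ℝ)| 2, ← Real.rpow_mul (abs_nonneg _)]
    norm_num
  rw [Real.norm_eq_abs, abs_of_nonneg (Real.rpow_nonneg hapos.le _)]
  calc (1 + ((n : ℝ) - c) ^ 2) ^ (-q) ≤ (|(n:ℝ)| ^ 2 / (2 * (1 + |c|) ^ 2)) ^ (-q) := h2
    _ = (2 * (1 + |c|) ^ 2) ^ q * |(n:ℝ)| ^ (-(2*q)) := h3

lemma summable_pi_prod : ∀ (k : ℕ) (g : Fin k → ℤ → ℝ), (∀ i, Summable (g i)) →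
    (∀ i m, 0 ≤ g i m) → Summable fun n : Fin k → ℤ => ∏ i, g i (n i) := by
  intro k
  induction k with
  | zero =>
    intro g _ _
    haveI : Subsingleton (Fin 0 → ℤ) := ⟨fun a b => funext fun i => i.elim0⟩
    haveI : Finite (Fin 0 → ℤ) := Finite.of_subsingleton
    exact Summable.of_finite
  | succ k ih =>
    intro g hg hpos
    refine ((Fin.consEquiv fun _ => ℤ).summable_iff).mp ?_
    have := (hg 0).mul_of_nonneg (ih (fun i => g i.succ) (fun i => hg i.succ)
      (fun i m => hpos _ _)) (fun m => hpos 0 m) (fun p => Finset.prod_nonneg fun i _ => hpos _ _)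
    refine this.congr fun p => ?_
    simp [Fin.consEquiv, Fin.prod_univ_succ, Function.comp]

/-- If `κ_η(f) < ∞` for some `η > k`, the theta series converges absolutely at
every point. -/
theorem theta_series_summable {k : ℕ} (hk : 0 < k) (f : E k → ℂ) (hf : Measurable f)
    (η : ℝ) (hη : (k : ℝ) < η) (hκ : kappa η f < ⊤)
    (x y : ℝ) (hy : 0 < y) (φ : ℝ) (ξ₁ ξ₂ : E k) :
    Summable (fun n : Fin k → ℤ =>
      ‖fphi f φ (Real.sqrt y • (intVec n - ξ₂)) *
        e ((1 / 2) * ‖intVec n - ξ₂‖ ^ 2 * x + ⟪intVec n, ξ₁⟫)‖) := by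
  have hk' : (0:ℝ) < k := by exact_mod_cast hk
  have hη0 : (0:ℝ) < η := hk'.trans hη
  have hη2 : (0:ℝ) < η / 2 := by linarith
  have hq : 1 < 2 * (η / (2 * k)) := by
    rw [show 2 * (η / (2 * k)) = η / k by field_simp, lt_div_iff₀ hk']
    linarith
  set q := η / (2 * k) with hqdef
  have hq0 : 0 < q := by rw [hqdef]; positivity
  set C := (kappa η f).toReal with hC
  have hC0 : 0 ≤ C := ENNReal.toReal_nonneg
  have hm : 0 < min 1 y := lt_min one_pos hy
  have hbound : ∀ w : E k, ‖fphi f φ w‖ ≤ C * (1 + ‖w‖ ^ 2) ^ (-(η / 2)) := by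
    intro w
    have hP : (0:ℝ) < (1 + ‖w‖ ^ 2) ^ (η / 2) := Real.rpow_pos_of_pos (by positivity) _
    have h1 : ENNReal.ofReal ((1 + ‖w‖ ^ 2) ^ (η / 2) * ‖fphi f φ w‖) ≤ kappa η f :=
      le_iSup_of_le w (le_iSup_of_le φ le_rfl)
    rw [ENNReal.ofReal_le_iff_le_toReal hκ.ne] at h1
    rw [Real.rpow_neg (by positivity), ← div_eq_mul_inv, le_div_iff₀ hP, mul_comm]
    exact h1
  have hsum : Summable fun n : Fin k → ℤ =>
      (C * (min 1 y) ^ (-(η / 2))) * ∏ i, (1 + ((n i : ℝ) - ξ₂ i) ^ 2) ^ (-q) :=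
    (summable_pi_prod k _ (fun i => summable_int_shift (ξ₂ i) hq)
      (fun i m => Real.rpow_nonneg (by positivity) _)).mul_left _
  refine hsum.of_nonneg_of_le (fun n => norm_nonneg _) fun n => ?_
  set v := intVec n - ξ₂ with hv
  have hvi : ∀ i, v i = (n i : ℝ) - ξ₂ i := fun i => rfl
  have hnv : ‖Real.sqrt y • v‖ ^ 2 = y * ‖v‖ ^ 2 := by
    rw [norm_smul, mul_pow, Real.norm_eq_abs, abs_of_nonneg (Real.sqrt_nonneg y),
      Real.sq_sqrt hy.le]
  have hvsum : ‖v‖ ^ 2 = ∑ i, (v i) ^ 2 := by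
    rw [EuclideanSpace.norm_eq, Real.sq_sqrt (Finset.sum_nonneg fun i _ => sq_nonneg _)]
    simp [Real.norm_eq_abs, sq_abs]
  rw [norm_mul, abs_e, mul_one]
  calc ‖fphi f φ (Real.sqrt y • v)‖
      ≤ C * (1 + ‖Real.sqrt y • v‖ ^ 2) ^ (-(η / 2)) := hbound _
    _ ≤ C * ((min 1 y) * (1 + ‖v‖ ^ 2)) ^ (-(η / 2)) := by
        refine mul_le_mul_of_nonneg_left ?_ hC0
        refine Real.rpow_le_rpow_of_nonpos (by positivity) ?_ (by linarith)
        rw [hnv]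
        have h1 : min 1 y ≤ 1 := min_le_left _ _
        have h2 : min 1 y ≤ y := min_le_right _ _
        nlinarith [sq_nonneg ‖v‖]
    _ = (C * (min 1 y) ^ (-(η / 2))) * (1 + ‖v‖ ^ 2) ^ (-(η / 2)) := by
        rw [Real.mul_rpow hm.le (by positivity)]; ring
    _ ≤ (C * (min 1 y) ^ (-(η / 2))) * ∏ i, (1 + ((n i : ℝ) - ξ₂ i) ^ 2) ^ (-q) := by
        refine mul_le_mul_of_nonneg_left ?_ (by positivity)
        have hprod : ∏ i, (1 + (v i) ^ 2) ≤ (1 + ‖v‖ ^ 2) ^ (k : ℕ) := by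
          calc ∏ i, (1 + (v i) ^ 2) ≤ ∏ _i : Fin k, (1 + ‖v‖ ^ 2) := by
                refine Finset.prod_le_prod (fun i _ => by positivity) fun i _ => ?_
                have hle : (v i) ^ 2 ≤ ‖v‖ ^ 2 := by
                  rw [hvsum]
                  exact Finset.single_le_sum (f := fun j => (v j) ^ 2) (fun j _ => sq_nonneg _) (Finset.mem_univ i)
                linarith
            _ = (1 + ‖v‖ ^ 2) ^ (k : ℕ) := by simp
        have heq : (1 + ‖v‖ ^ 2) ^ (-(η / 2)) = ((1 + ‖v‖ ^ 2) ^ (k : ℕ)) ^ (-q) := by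
          rw [← Real.rpow_natCast (1 + ‖v‖ ^ 2) k, ← Real.rpow_mul (by positivity)]
          congr 1
          rw [hqdef]
          field_simp
        rw [heq]
        calc ((1 + ‖v‖ ^ 2) ^ (k : ℕ)) ^ (-q) ≤ (∏ i, (1 + (v i) ^ 2)) ^ (-q) :=
              Real.rpow_le_rpow_of_nonpos (by positivity) hprod (by linarith)
          _ = ∏ i, (1 + (v i) ^ 2) ^ (-q) :=
              (Real.finset_prod_rpow _ _ (fun i _ => by positivity) _).symm
          _ = ∏ i, (1 + ((n i : ℝ) - ξ₂ i) ^ 2) ^ (-q) := by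
              exact Finset.prod_congr rfl fun i _ => by rw [hvi i]
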